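/- Let λ = (λ_1, …, λ_l) ∈ 𝒫^n_C and set x_λ = ρ_{λ_l}⋯ρ_{λ_1} in the affine Weyl group of type C_n^{(1)}. Write x_λ = v(λ) t_{-ξ(λ)} with v(λ) ∈ W and ξ(λ) ∈ Q^∨. Then v(λ) = v_{λ_l}⋯v_{λ_2} v_{λ_1} and ξ(λ) = ε_1 + v_{λ_1}^{-1}ε_1 + v_{λ_1}^{-1}v_{λ_2}^{-1}ε_1 + ⋯ + v_{λ_1}^{-1}⋯v_{λ_{l-1}}^{-1}ε_1. -/

import Mathlib

/-- `V n = X^∨ = ⊕ ℤ ε_j` -/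
abbrev V (n : ℕ) := Fin n → ℤ

/-- `ε_i` (1-indexed). -/
def eps (n i : ℕ) : V n := fun j => if (j : ℕ) + 1 = i then 1 else 0

/-- simple coroot `α_i^∨` (1-indexed): `ε_i - ε_{i+1}` for `i < n`, `ε_n` for `i = n`. -/
def alphaV (n i : ℕ) : V n := if i = n then eps n n else eps n i - eps n (i+1)

/-- The simple reflection `s_i` (1 ≤ i ≤ n) of the Weyl group of type `C_n`,
realized as a (signed) permutation of `V n`. -/
def sC (n i : ℕ) : Equiv.Perm (V n) :=
  if h : 1 ≤ i ∧ i < n then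
    Equiv.arrowCongr (Equiv.swap (⟨i - 1, by omega⟩ : Fin n) ⟨i, h.2⟩) (Equiv.refl ℤ)
  else if i = n then
    Equiv.piCongrRight (fun j => if (j : ℕ) + 1 = n then Equiv.neg ℤ else Equiv.refl ℤ)
  else 1

/-- Product of the simple reflections along a list of (1-indexed) indices. -/
def wprod (n : ℕ) (L : List ℕ) : Equiv.Perm (V n) := (L.map (sC n)).prod

/-- Translation element `t_ξ : x ↦ x + ξ`. -/
def tE (n : ℕ) (ξ : V n) : Equiv.Perm (V n) := Equiv.addRight ξ

/-- Reduced word of `v_i`. -/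
def vword (n i : ℕ) : List ℕ :=
  if i ≤ n then List.range' i (n - i + 1) ++ (List.range' 1 (n - 1)).reverse
  else (List.range' 1 (2 * n - i)).reverse

/-- `v_i`. -/
def vC (n i : ℕ) : Equiv.Perm (V n) := wprod n (vword n i)

/-- Word of `u_k = s_{n+1-k} ⋯ s_{n-1} s_n`. -/
def uwordC (n k : ℕ) : List ℕ := List.range' (n + 1 - k) k

/-- `u_k`. -/
def uC (n k : ℕ) : Equiv.Perm (V n) := wprod n (uwordC n k)

/-- Word of `s_θ = s_1 ⋯ s_{n-1} s_n s_{n-1} ⋯ s_1`. -/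
def thetaWord (n : ℕ) : List ℕ := List.range' 1 n ++ (List.range' 1 (n - 1)).reverse

/-- Affine simple reflections: `s_0 = s_θ t_{-ε_1}`, and `s_i = sC n i` for `i ≥ 1`;
realized as permutations (affine transformations) of `V n`. -/
def sAf (n i : ℕ) : Equiv.Perm (V n) :=
  if i = 0 then wprod n (thetaWord n) * tE n (-(eps n 1)) else sC n i

/-- Word of `ρ_i`. -/
def rhoWord (n i : ℕ) : List ℕ :=
  if i ≤ n then (List.range i).reverse
  else List.range' (2 * n - i + 1) (i - n) ++ (List.range n).reverse

/-- `ρ_i`. -/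
def rhoC (n i : ℕ) : Equiv.Perm (V n) := ((rhoWord n i).map (sAf n)).prod

/-- `x_λ = ρ_{λ_l} ⋯ ρ_{λ_1}`. -/
def xlam (n : ℕ) (L : List ℕ) : Equiv.Perm (V n) := (L.reverse.map (rhoC n)).prod

/-- `v(λ) = v_{λ_l} ⋯ v_{λ_1}`. -/
def vlamP (n : ℕ) (L : List ℕ) : Equiv.Perm (V n) := (L.reverse.map (vC n)).prod

/-- `u_λ = u_{λ_l} ⋯ u_{λ_1}`. -/
def ulamP (n : ℕ) (L : List ℕ) : Equiv.Perm (V n) := (L.reverse.map (uC n)).prod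

/-- The set `𝒫^n_C`: partitions with parts in `(0, 2n]`, parts `< n` strictly decreasing. -/
def PCset (n : ℕ) : Set (List ℕ) :=
  {L | L.Chain' (fun a b => b ≤ a ∧ (a < n → b < a)) ∧ ∀ x ∈ L, 0 < x ∧ x ≤ 2 * n}

/-- The set `𝒮𝒫(n)` of strict partitions with parts at most `n`. -/
def SPset (n : ℕ) : Set (List ℕ) :=
  {L | L.Chain' (fun a b => b < a) ∧ ∀ x ∈ L, 0 < x ∧ x ≤ n}


section Aux
variable (n : ℕ)

lemma sC_add (i : ℕ) (x y : V n) : sC n i (x + y) = sC n i x + sC n i y := by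
  unfold sC
  split_ifs with h h'
  · funext j; simp [Equiv.arrowCongr]
  · funext j; simp [Equiv.piCongrRight]
    split_ifs <;> (simp [Equiv.neg]; try ring)
  · rfl

lemma sC_sq (i : ℕ) : sC n i * sC n i = 1 := by
  apply Equiv.ext; intro x
  unfold sC
  split_ifs with h h'
  · funext j
    simp [Equiv.arrowCongr, Equiv.Perm.mul_apply, Equiv.swap_apply_self]
  · funext j
    simp [Equiv.piCongrRight, Equiv.Perm.mul_apply]
    split_ifs <;> simp [Equiv.neg]
  · rfl

end Aux

section Aux2
variable (n : ℕ)

lemma sC_inv (i : ℕ) : (sC n i)⁻¹ = sC n i :=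
  inv_eq_of_mul_eq_one_right (sC_sq n i)

lemma wprod_append (L1 L2 : List ℕ) :
    wprod n (L1 ++ L2) = wprod n L1 * wprod n L2 := by
  simp [wprod]

lemma wprod_cons (a : ℕ) (L : List ℕ) :
    wprod n (a :: L) = sC n a * wprod n L := by
  simp [wprod]

lemma wprod_reverse (L : List ℕ) : wprod n L.reverse = (wprod n L)⁻¹ := by
  induction L with
  | nil => simp [wprod]
  | cons a L ih =>
    rw [List.reverse_cons, wprod_append, ih, wprod_cons n a L, mul_inv_rev, sC_inv]
    simp [wprod]

lemma wprod_add (L : List ℕ) (x y : V n) :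
    wprod n L (x + y) = wprod n L x + wprod n L y := by
  induction L with
  | nil => rfl
  | cons a L ih =>
    rw [wprod_cons]
    simp only [Equiv.Perm.mul_apply, ih, sC_add]

/-- additive permutations -/
def IsAddP (e : Equiv.Perm (V n)) : Prop := ∀ x y, e (x + y) = e x + e y

lemma IsAddP.mul {e f : Equiv.Perm (V n)} (he : IsAddP n e) (hf : IsAddP n f) :
    IsAddP n (e * f) := by
  intro x y; simp only [Equiv.Perm.mul_apply, hf x y, he (f x) (f y)]

lemma IsAddP.inv {e : Equiv.Perm (V n)} (he : IsAddP n e) : IsAddP n e⁻¹ := by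
  intro x y
  apply e.injective
  rw [he, Equiv.Perm.coe_inv, Equiv.apply_symm_apply, Equiv.apply_symm_apply, Equiv.apply_symm_apply]

lemma isAddP_wprod (L : List ℕ) : IsAddP n (wprod n L) := wprod_add n L

lemma isAddP_vC (i : ℕ) : IsAddP n (vC n i) := isAddP_wprod n _

/-- package an additive perm as an AddMonoidHom -/
def IsAddP.hom {e : Equiv.Perm (V n)} (he : IsAddP n e) : V n →+ V n :=
  AddMonoidHom.mk' e he

lemma IsAddP.neg {e : Equiv.Perm (V n)} (he : IsAddP n e) (x : V n) :
    e (-x) = - e x := map_neg he.hom x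

-- tE lemmas
lemma tE_zero : tE n 0 = 1 := by
  apply Equiv.ext; intro x; simp [tE]

lemma tE_mul (ξ η : V n) : tE n ξ * tE n η = tE n (ξ + η) := by
  apply Equiv.ext; intro x
  simp [tE, Equiv.Perm.mul_apply]
  abel

lemma tE_comm {e : Equiv.Perm (V n)} (he : IsAddP n e) (ξ : V n) :
    tE n ξ * e = e * tE n (e⁻¹ ξ) := by
  apply Equiv.ext; intro x
  simp only [tE, Equiv.Perm.mul_apply, Equiv.coe_addRight, he x (e⁻¹ ξ)]
  rw [Equiv.Perm.coe_inv, Equiv.apply_symm_apply]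

end Aux2

section Rho
variable (n : ℕ)

lemma sAf_pos (i : ℕ) (h : i ≠ 0) : sAf n i = sC n i := by
  simp [sAf, h]

lemma map_sAf_eq_map_sC (X : List ℕ) (hX : ∀ a ∈ X, 1 ≤ a) :
    X.map (sAf n) = X.map (sC n) := by
  apply List.map_congr_left
  intro a ha
  exact sAf_pos n a (by have := hX a ha; omega)

lemma range0_eq (i : ℕ) (h : 1 ≤ i) : List.range i = 0 :: List.range' 1 (i-1) := by
  obtain ⟨k, rfl⟩ : ∃ k, i = k + 1 := ⟨i-1, by omega⟩
  simp [List.range_eq_range', List.range'_succ]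

lemma range'_concat_last (s m : ℕ) (h : 1 ≤ m) :
    List.range' s m = List.range' s (m-1) ++ [s + (m-1)] := by
  obtain ⟨k, rfl⟩ : ∃ k, m = k + 1 := ⟨m-1, by omega⟩
  simp [List.range'_concat]

lemma rho_eq (hn : 1 ≤ n) (i : ℕ) (h1 : 1 ≤ i) (h2 : i ≤ 2 * n) :
    rhoC n i = vC n i * tE n (-(eps n 1)) := by
  have hθ : wprod n (thetaWord n) =
      wprod n (List.range' 1 n) * (wprod n (List.range' 1 (n-1)))⁻¹ := by
    rw [thetaWord, wprod_append, wprod_reverse]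
  by_cases hi : i ≤ n
  · -- case i ≤ n
    have hw : rhoWord n i = (List.range' 1 (i-1)).reverse ++ [0] := by
      rw [rhoWord, if_pos hi, range0_eq i h1, List.reverse_cons]
    have hrho : rhoC n i = (wprod n (List.range' 1 (i-1)))⁻¹ *
        (wprod n (thetaWord n) * tE n (-(eps n 1))) := by
      rw [rhoC, hw, List.map_append,
        map_sAf_eq_map_sC n _ (fun a ha => by
          rw [List.mem_reverse, List.mem_range'_1] at ha; omega),
        List.prod_append, ← wprod, wprod_reverse]
      simp [sAf]
    have hsplit : wprod n (List.range' 1 n) =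
        wprod n (List.range' 1 (i-1)) * wprod n (List.range' i (n-i+1)) := by
      rw [← wprod_append,
        show List.range' i (n-i+1) = List.range' (1+1*(i-1)) (n-i+1) by congr 1; omega,
        List.range'_append, show (i-1)+(n-i+1) = n by omega]
    have hv : vC n i = wprod n (List.range' i (n-i+1)) *
        (wprod n (List.range' 1 (n-1)))⁻¹ := by
      rw [vC, vword, if_pos hi, wprod_append, wprod_reverse]
    rw [hrho, hθ, hsplit, hv]
    group
  · -- case n < i ≤ 2n
    set j := 2*n - i with hj
    have hw : rhoWord n i =
        List.range' (j+1) (n-j) ++ ((List.range' 1 (n-1)).reverse ++ [0]) := by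
      rw [rhoWord, if_neg hi, range0_eq n hn, List.reverse_cons,
        show 2*n - i + 1 = j+1 by omega, show i - n = n - j by omega]
    have hrho : rhoC n i = wprod n (List.range' (j+1) (n-j)) *
        ((wprod n (List.range' 1 (n-1)))⁻¹ *
          (wprod n (thetaWord n) * tE n (-(eps n 1)))) := by
      rw [rhoC, hw, List.map_append, List.map_append,
        map_sAf_eq_map_sC n _ (fun a ha => by rw [List.mem_range'_1] at ha; omega),
        map_sAf_eq_map_sC n _ (fun a ha => by
          rw [List.mem_reverse, List.mem_range'_1] at ha; omega),
        List.prod_append, List.prod_append, ← wprod, ← wprod, wprod_reverse]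
      simp [sAf, mul_assoc]
    have hA : wprod n (List.range' (j+1) (n-j)) =
        wprod n (List.range' (j+1) (n-j-1)) * sC n n := by
      rw [range'_concat_last (j+1) (n-j) (by omega), wprod_append,
        show j+1+(n-j-1) = n by omega]
      simp [wprod]
    have hn1 : wprod n (List.range' 1 n) =
        wprod n (List.range' 1 (n-1)) * sC n n := by
      rw [range'_concat_last 1 n hn, wprod_append, show 1+(n-1) = n by omega]
      simp [wprod]
    have hC : wprod n (List.range' 1 (n-1)) =
        wprod n (List.range' 1 j) * wprod n (List.range' (j+1) (n-j-1)) := by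
      rw [← wprod_append,
        show List.range' (j+1) (n-j-1) = List.range' (1+1*j) (n-j-1) by congr 1; omega,
        List.range'_append, show j+(n-j-1) = n-1 by omega]
    have hv : vC n i = (wprod n (List.range' 1 j))⁻¹ := by
      rw [vC, vword, if_neg hi, wprod_reverse, hj]
    rw [hrho, hθ, hn1, hA, hv, hC]
    have hss : ∀ x : Equiv.Perm (V n), sC n n * (sC n n * x) = x := fun x => by
      rw [← mul_assoc, sC_sq n n, one_mul]
    simp only [mul_inv_rev, mul_assoc, inv_mul_cancel_left, mul_inv_cancel_left, hss]

end Rho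

section Main
variable (n : ℕ)

lemma main_ind (hn : 1 ≤ n) (L : List ℕ) (hL : ∀ x ∈ L, 1 ≤ x ∧ x ≤ 2*n) :
    xlam n L = vlamP n L *
      tE n (-(∑ i ∈ Finset.range L.length,
        ((((L.take i).reverse.map (vC n)).prod)⁻¹ : Equiv.Perm (V n)) (eps n 1))) := by
  induction L with
  | nil => simp [xlam, vlamP, tE_zero]
  | cons a L ih =>
    have ha := hL a (by simp)
    have hL' : ∀ x ∈ L, 1 ≤ x ∧ x ≤ 2*n := fun x hx => hL x (by simp [hx])
    have hx : xlam n (a :: L) = xlam n L * rhoC n a := by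
      rw [xlam, List.reverse_cons, List.map_append, List.prod_append, ← xlam]
      simp
    have hvl : vlamP n (a :: L) = vlamP n L * vC n a := by
      rw [vlamP, List.reverse_cons, List.map_append, List.prod_append, ← vlamP]
      simp
    have hvinv : IsAddP n ((vC n a)⁻¹) := (isAddP_vC n a).inv
    set S := ∑ i ∈ Finset.range L.length,
      ((((L.take i).reverse.map (vC n)).prod)⁻¹ : Equiv.Perm (V n)) (eps n 1) with hS
    have key : ∀ k, (((((a :: L).take (k+1)).reverse.map (vC n)).prod)⁻¹ :
        Equiv.Perm (V n)) (eps n 1)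
        = (vC n a)⁻¹ (((((L.take k).reverse.map (vC n)).prod)⁻¹ :
            Equiv.Perm (V n)) (eps n 1)) := by
      intro k
      rw [List.take_succ_cons, List.reverse_cons, List.map_append,
        List.prod_append, mul_inv_rev]
      simp [Equiv.Perm.mul_apply]
    have hmapsum := map_sum (IsAddP.hom n hvinv)
      (fun k => ((((L.take k).reverse.map (vC n)).prod)⁻¹ : Equiv.Perm (V n)) (eps n 1))
      (Finset.range L.length)
    have hcoe : ∀ x, (IsAddP.hom n hvinv) x = (vC n a)⁻¹ x := fun _ => rfl
    have hsum : (∑ i ∈ Finset.range (a :: L).length,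
        (((((a :: L).take i).reverse.map (vC n)).prod)⁻¹ : Equiv.Perm (V n)) (eps n 1))
        = (vC n a)⁻¹ S + eps n 1 := by
      rw [List.length_cons, Finset.sum_range_succ',
        Finset.sum_congr rfl (fun k _ => key k),
        show (∑ k ∈ Finset.range L.length,
            (vC n a)⁻¹ (((((L.take k).reverse.map (vC n)).prod)⁻¹ :
              Equiv.Perm (V n)) (eps n 1)))
          = ∑ k ∈ Finset.range L.length, (IsAddP.hom n hvinv)
            (((((L.take k).reverse.map (vC n)).prod)⁻¹ :
              Equiv.Perm (V n)) (eps n 1)) from rfl, ← hmapsum, hcoe, ← hS]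
      simp
    have hstep : tE n (-S) * (vC n a * tE n (-(eps n 1)))
        = vC n a * tE n (-((vC n a)⁻¹ S + eps n 1)) := by
      rw [← mul_assoc, tE_comm n (isAddP_vC n a) (-S), mul_assoc, tE_mul,
        hvinv.neg n S, ← neg_add]
    rw [hsum, hx, ih hL', rho_eq n hn a ha.1 ha.2, hvl, mul_assoc, hstep, ← mul_assoc]

end Main

/-- writing `x_λ = v(λ) t_{-ξ(λ)}`, we have `v(λ) = v_{λ_l}⋯v_{λ_1}` and
`ξ(λ) = ∑_{i=0}^{l-1} v_{λ_1}⁻¹⋯v_{λ_i}⁻¹ ε_1`. -/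
theorem stmt3 (n : ℕ) (hn : 1 ≤ n) (L : List ℕ) (hL : L ∈ PCset n) :
    xlam n L = vlamP n L *
      tE n (-(∑ i ∈ Finset.range L.length,
        ((((L.take i).reverse.map (vC n)).prod)⁻¹ : Equiv.Perm (V n)) (eps n 1))) := by
  exact main_ind n hn L (fun x hx => ⟨(hL.2 x hx).1, (hL.2 x hx).2⟩)
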